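/- Let G be a locally compact abelian group with Haar measure μ, and let ν₀ = ν₁ + … + ν_n be a finite sum of measures on G. Then the uniform asymptotic upper density is subadditive: D̄(ν₀;μ) ≤ D̄(ν₁;μ) + … + D̄(ν_n;μ). In particular, if A₀ = A₁ ∪ … ∪ A_n is a disjoint union of measurable sets and ν is a measure, then D̄(ν|_{A₀};μ) ≤ Σ_{j=1}^{n} D̄(ν|_{A_j};μ). -/

import Mathlib

open MeasureTheory Set Pointwise Filter ENNReal

/-- The uniform asymptotic upper density of a measure `ν` with respect to `μ`:
`inf` over nonempty compact sets `C` of `sup` over Borel sets `V` with compact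
closure of `ν V / μ (C + V)`, where `C + V` is a Minkowski sum. -/
noncomputable def uaud {G : Type*} [AddCommGroup G] [TopologicalSpace G] [MeasurableSpace G]
    (ν μ : Measure G) : ℝ≥0∞ :=
  ⨅ C ∈ {C : Set G | IsCompact C ∧ C.Nonempty},
    ⨆ V ∈ {V : Set G | MeasurableSet V ∧ IsCompact (closure V)},
      ν V / μ (C + V)

private lemma uaud_sum_le {G : Type*} [AddCommGroup G]
    [TopologicalSpace G] [IsTopologicalAddGroup G]
    [MeasurableSpace G]
    (μ : Measure G) (n : ℕ) (ν : Fin n → Measure G) :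
    uaud (∑ j, ν j) μ ≤ ∑ j, uaud (ν j) μ := by
  classical
  set S : Set (Set G) := {C : Set G | IsCompact C ∧ C.Nonempty} with hS
  set T : Set (Set G) := {V : Set G | MeasurableSet V ∧ IsCompact (closure V)} with hT
  have hSne : Nonempty S := ⟨⟨{0}, isCompact_singleton, singleton_nonempty 0⟩⟩
  -- the inner sup as a function of (the subtype of) compacts
  set F : Fin n → S → ℝ≥0∞ := fun j C => ⨆ V ∈ T, (ν j) V / μ ((C : Set G) + V) with hF
  have hmono : ∀ (t : Finset (Fin n)) (C C' : S), ∃ D : S,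
      ∀ a ∈ t, F a D ≤ F a C ∧ F a D ≤ F a C' := by
    intro t C C'
    refine ⟨⟨(C : Set G) ∪ (C' : Set G), C.2.1.union C'.2.1,
      C.2.2.mono subset_union_left⟩, fun a _ => ?_⟩
    constructor <;>
    · refine iSup₂_mono fun V hV => ?_
      refine ENNReal.div_le_div_left (measure_mono ?_) _
      exact add_subset_add_right (by first | exact subset_union_left | exact subset_union_right)
  have step1 : uaud (∑ j, ν j) μ ≤ ⨅ C : S, ∑ j, F j C := by
    rw [uaud, iInf_subtype']
    refine iInf_mono fun C => ?_
    refine iSup₂_le fun V hV => ?_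
    have h1 : (∑ j, ν j) V = ∑ j, (ν j) V := by
      simp [Measure.finset_sum_apply]
    rw [h1, div_eq_mul_inv, Finset.sum_mul]
    refine Finset.sum_le_sum fun j _ => ?_
    rw [← div_eq_mul_inv]
    exact le_iSup₂ (f := fun V (_ : V ∈ T) => (ν j) V / μ ((C : Set G) + V)) V hV
  have step2 : (⨅ C : S, ∑ j, F j C) = ∑ j, ⨅ C : S, F j C := by
    exact ENNReal.iInf_sum fun t i j => hmono t i j
  have step3 : ∀ j, (⨅ C : S, F j C) = uaud (ν j) μ := by
    intro j
    rw [uaud, iInf_subtype']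
  calc uaud (∑ j, ν j) μ ≤ ⨅ C : S, ∑ j, F j C := step1
    _ = ∑ j, ⨅ C : S, F j C := step2
    _ = ∑ j, uaud (ν j) μ := by simp_rw [step3]

theorem uaud_subadditive {G : Type*} [AddCommGroup G]
    [TopologicalSpace G] [IsTopologicalAddGroup G] [LocallyCompactSpace G] [T2Space G]
    [MeasurableSpace G] [BorelSpace G]
    (μ : Measure G) [μ.IsAddHaarMeasure] (n : ℕ) (ν : Fin n → Measure G) :
    uaud (∑ j, ν j) μ ≤ ∑ j, uaud (ν j) μ ∧
      ∀ (ν₀ : Measure G) (A : Fin n → Set G), (∀ j, MeasurableSet (A j)) →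
        Pairwise (Function.onFun Disjoint A) →
        uaud (ν₀.restrict (⋃ j, A j)) μ ≤ ∑ j, uaud (ν₀.restrict (A j)) μ := by
  refine ⟨uaud_sum_le μ n ν, fun ν₀ A hm hd => ?_⟩
  rw [Measure.restrict_iUnion hd hm, Measure.sum_fintype]
  exact uaud_sum_le μ n _
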